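/- Let G be the cluster group with presentation on generators t₁, t₂, t₃ subject to the relations t₁² = t₂² = t₃² = e, the braid relations, and the cycle relations, and let I = {t₁, t₂}. The element w = t₂t₃t₁t₂ admits two distinct factorisations w = ab = a′b′ with a, a′ ∈ G^I, b, b′ ∈ G_I, and l(w) = l(a) + l(b) = l(a′) + l(b′): namely a = t₂t₃, b = t₁t₂, a′ = t₁t₂t₃, b′ = t₁, where l(w) = 4, l(a) = l(b) = 2, l(a′) = 3, l(b′) = 1, and a ≠ a′, b ≠ b′. Hence the factorisation of elements of G with respect to a parabolic subgroup is not unique in general. -/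

import Mathlib

/-- The relators of the cluster group presentation associated to the quiver of
mutation-Dynkin type A₃: the generators `t₁, t₂, t₃` (indexed by `0, 1, 2 : Fin 3`) are
involutions, they satisfy the braid relations and the cycle relations. -/
def clusterRels : Set (FreeGroup (Fin 3)) :=
  { FreeGroup.of 0 ^ 2, FreeGroup.of 1 ^ 2, FreeGroup.of 2 ^ 2,
    (FreeGroup.of 0 * FreeGroup.of 1 * FreeGroup.of 0) *
      (FreeGroup.of 1 * FreeGroup.of 0 * FreeGroup.of 1)⁻¹,
    (FreeGroup.of 0 * FreeGroup.of 2 * FreeGroup.of 0) *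
      (FreeGroup.of 2 * FreeGroup.of 0 * FreeGroup.of 2)⁻¹,
    (FreeGroup.of 1 * FreeGroup.of 2 * FreeGroup.of 1) *
      (FreeGroup.of 2 * FreeGroup.of 1 * FreeGroup.of 2)⁻¹,
    (FreeGroup.of 0 * FreeGroup.of 1 * FreeGroup.of 2 * FreeGroup.of 0) *
      (FreeGroup.of 1 * FreeGroup.of 2 * FreeGroup.of 0 * FreeGroup.of 1)⁻¹,
    (FreeGroup.of 1 * FreeGroup.of 2 * FreeGroup.of 0 * FreeGroup.of 1) *
      (FreeGroup.of 2 * FreeGroup.of 0 * FreeGroup.of 1 * FreeGroup.of 2)⁻¹ }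

/-- The cluster group of mutation-Dynkin type A₃. -/
abbrev ClusterGroupA3 : Type := PresentedGroup clusterRels

/-- `t i` is the image in the cluster group of the generator `tᵢ₊₁`. -/
def t (i : Fin 3) : ClusterGroupA3 := PresentedGroup.of i

/-- The length of an element of the cluster group: the least `r` such that `w` is a
product of `r` generators. -/
noncomputable def len (w : ClusterGroupA3) : ℕ :=
  sInf {r : ℕ | ∃ L : List (Fin 3), L.length = r ∧ (L.map t).prod = w}

/-- `w` lies in `G^I` for `I = {t₁, t₂}`. -/
def mem_GI_upper (w : ClusterGroupA3) : Prop :=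
  ∀ x ∈ ({0, 1} : Set (Fin 3)), len w < len (w * t x)

/-! ### Auxiliary: permutation representation -/

def fperm : Fin 3 → Equiv.Perm (Fin 4) := fun i => Equiv.swap 0 i.succ

lemma hrel : ∀ r ∈ clusterRels, FreeGroup.lift fperm r = 1 := by
  intro r hr
  simp only [clusterRels, Set.mem_insert_iff, Set.mem_singleton_iff] at hr
  rcases hr with rfl|rfl|rfl|rfl|rfl|rfl|rfl|rfl <;>
    simp only [map_mul, map_inv, map_pow, FreeGroup.lift_apply_of] <;> decide

def phi : ClusterGroupA3 →* Equiv.Perm (Fin 4) := PresentedGroup.toGroup hrel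

lemma phit (i : Fin 3) : phi (t i) = fperm i := PresentedGroup.toGroup.of hrel

lemma len_eq_of (L : List (Fin 3)) (w : ClusterGroupA3) (hL : (L.map t).prod = w)
    (h : ∀ M : List (Fin 3), M.length < L.length → (M.map fperm).prod ≠ phi w) :
    len w = L.length := by
  have hmem : L.length ∈
      {r : ℕ | ∃ L' : List (Fin 3), L'.length = r ∧ (L'.map t).prod = w} := ⟨L, rfl, hL⟩
  refine le_antisymm (Nat.sInf_le hmem) ?_
  obtain ⟨M, hMl, hMp⟩ := Nat.sInf_mem (⟨L.length, hmem⟩ :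
    Set.Nonempty {r : ℕ | ∃ L' : List (Fin 3), L'.length = r ∧ (L'.map t).prod = w})
  by_contra hc
  push_neg at hc
  refine h M (by rw [hMl]; exact hc) ?_
  rw [← hMp, map_list_prod, List.map_map]
  simp only [Function.comp_def, phit]

lemma phiw : phi (t 1 * t 2 * t 0 * t 1) = ([1, 2, 0, 1].map fperm).prod := by
  simp [map_mul, phit, mul_assoc]

lemma phia : phi (t 1 * t 2) = ([1, 2].map fperm).prod := by
  simp [map_mul, phit, mul_assoc]

lemma phib : phi (t 0 * t 1) = ([0, 1].map fperm).prod := by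
  simp [map_mul, phit, mul_assoc]

lemma phia' : phi (t 0 * t 1 * t 2) = ([0, 1, 2].map fperm).prod := by
  simp [map_mul, phit, mul_assoc]

lemma phib' : phi (t 0) = ([0].map fperm).prod := by
  simp [phit]

lemma len_w : len (t 1 * t 2 * t 0 * t 1) = 4 := by
  have := len_eq_of [1, 2, 0, 1] (t 1 * t 2 * t 0 * t 1) (by simp [mul_assoc]) ?_
  · simpa using this
  · intro M hM
    rw [phiw]
    rcases M with _|⟨x, _|⟨y, _|⟨z, _|⟨u, M⟩⟩⟩⟩
    · decide
    · fin_cases x <;> decide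
    · fin_cases x <;> fin_cases y <;> decide
    · fin_cases x <;> fin_cases y <;> fin_cases z <;> decide
    · simp at hM; omega

lemma len_a : len (t 1 * t 2) = 2 := by
  have := len_eq_of [1, 2] (t 1 * t 2) (by simp [mul_assoc]) ?_
  · simpa using this
  · intro M hM
    rw [phia]
    rcases M with _|⟨x, _|⟨y, M⟩⟩
    · decide
    · fin_cases x <;> decide
    · simp at hM

lemma len_b : len (t 0 * t 1) = 2 := by
  have := len_eq_of [0, 1] (t 0 * t 1) (by simp [mul_assoc]) ?_
  · simpa using this
  · intro M hM
    rw [phib]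
    rcases M with _|⟨x, _|⟨y, M⟩⟩
    · decide
    · fin_cases x <;> decide
    · simp at hM

lemma len_a' : len (t 0 * t 1 * t 2) = 3 := by
  have := len_eq_of [0, 1, 2] (t 0 * t 1 * t 2) (by simp [mul_assoc]) ?_
  · simpa using this
  · intro M hM
    rw [phia']
    rcases M with _|⟨x, _|⟨y, _|⟨z, M⟩⟩⟩
    · decide
    · fin_cases x <;> decide
    · fin_cases x <;> fin_cases y <;> decide
    · simp at hM; omega

lemma len_b' : len (t 0) = 1 := by
  have := len_eq_of [0] (t 0) (by simp) ?_
  · simpa using this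
  · intro M hM
    rw [phib']
    rcases M with _|⟨x, M⟩
    · decide
    · simp at hM

lemma len3 (i j k : Fin 3)
    (h : ∀ M : List (Fin 3), M.length < 3 → (M.map fperm).prod ≠ ([i, j, k].map fperm).prod) :
    len (t i * t j * t k) = 3 := by
  have := len_eq_of [i, j, k] (t i * t j * t k) (by simp [mul_assoc]) ?_
  · simpa using this
  · intro M hM
    rw [show phi (t i * t j * t k) = ([i, j, k].map fperm).prod by simp [map_mul, phit, mul_assoc]]
    exact h M (by simpa using hM)

lemma len4 (i j k l : Fin 3)
    (h : ∀ M : List (Fin 3), M.length < 4 →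
      (M.map fperm).prod ≠ ([i, j, k, l].map fperm).prod) :
    len (t i * t j * t k * t l) = 4 := by
  have := len_eq_of [i, j, k, l] (t i * t j * t k * t l) (by simp [mul_assoc]) ?_
  · simpa using this
  · intro M hM
    rw [show phi (t i * t j * t k * t l) = ([i, j, k, l].map fperm).prod by
      simp [map_mul, phit, mul_assoc]]
    exact h M (by simpa using hM)

lemma no3 (c : Equiv.Perm (Fin 4))
    (h0 : (([] : List (Fin 3)).map fperm).prod ≠ c)
    (h1 : ∀ x : Fin 3, ([x].map fperm).prod ≠ c)
    (h2 : ∀ x y : Fin 3, ([x, y].map fperm).prod ≠ c) :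
    ∀ M : List (Fin 3), M.length < 3 → (M.map fperm).prod ≠ c := by
  intro M hM
  rcases M with _|⟨x, _|⟨y, _|⟨z, M⟩⟩⟩
  · exact h0
  · exact h1 x
  · exact h2 x y
  · simp at hM; omega

lemma no4 (c : Equiv.Perm (Fin 4))
    (h0 : (([] : List (Fin 3)).map fperm).prod ≠ c)
    (h1 : ∀ x : Fin 3, ([x].map fperm).prod ≠ c)
    (h2 : ∀ x y : Fin 3, ([x, y].map fperm).prod ≠ c)
    (h3 : ∀ x y z : Fin 3, ([x, y, z].map fperm).prod ≠ c) :
    ∀ M : List (Fin 3), M.length < 4 → (M.map fperm).prod ≠ c := by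
  intro M hM
  rcases M with _|⟨x, _|⟨y, _|⟨z, _|⟨u, M⟩⟩⟩⟩
  · exact h0
  · exact h1 x
  · exact h2 x y
  · exact h3 x y z
  · simp at hM; omega

lemma len_at0 : len (t 1 * t 2 * t 0) = 3 := by
  refine len3 1 2 0 (no3 _ (by decide) (by decide) (by decide))

lemma len_at1 : len (t 1 * t 2 * t 1) = 3 := by
  refine len3 1 2 1 (no3 _ (by decide) (by decide) (by decide))

lemma len_a't0 : len (t 0 * t 1 * t 2 * t 0) = 4 := by
  refine len4 0 1 2 0 (no4 _ (by decide) (by decide) (by decide) (by decide))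

lemma len_a't1 : len (t 0 * t 1 * t 2 * t 1) = 4 := by
  refine len4 0 1 2 1 (no4 _ (by decide) (by decide) (by decide) (by decide))

lemma cycle_rel : t 1 * t 2 * t 0 * t 1 = t 0 * t 1 * t 2 * t 0 := by
  have : ((PresentedGroup.mk clusterRels) ((FreeGroup.of 0 * FreeGroup.of 1 * FreeGroup.of 2 *
      FreeGroup.of 0) * (FreeGroup.of 1 * FreeGroup.of 2 * FreeGroup.of 0 *
      FreeGroup.of 1)⁻¹) : ClusterGroupA3) = 1 := by
    apply (QuotientGroup.eq_one_iff _).mpr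
    apply Subgroup.subset_normalClosure
    simp [clusterRels]
  simp only [map_mul, map_inv] at this
  have h2 := mul_inv_eq_one.mp this
  simpa [t, PresentedGroup.of] using h2.symm

/-- For `I = {t₁, t₂}`, the element `w = t₂t₃t₁t₂` admits two distinct length-additive
factorisations `w = ab = a′b′` with `a, a′ ∈ G^I` and `b, b′ ∈ G_I`:
`a = t₂t₃`, `b = t₁t₂`, `a′ = t₁t₂t₃`, `b′ = t₁`.  Hence the factorisation with
respect to a parabolic subgroup is not unique in general. -/
theorem stmt_14 :
    let w : ClusterGroupA3 := t 1 * t 2 * t 0 * t 1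
    let a : ClusterGroupA3 := t 1 * t 2
    let b : ClusterGroupA3 := t 0 * t 1
    let a' : ClusterGroupA3 := t 0 * t 1 * t 2
    let b' : ClusterGroupA3 := t 0
    mem_GI_upper a ∧ mem_GI_upper a' ∧
    b ∈ Subgroup.closure {t 0, t 1} ∧ b' ∈ Subgroup.closure {t 0, t 1} ∧
    w = a * b ∧ w = a' * b' ∧
    len w = 4 ∧ len a = 2 ∧ len b = 2 ∧ len a' = 3 ∧ len b' = 1 ∧
    len w = len a + len b ∧ len w = len a' + len b' ∧
    a ≠ a' ∧ b ≠ b' := by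
  intro w a b a' b'
  refine ⟨?_, ?_, ?_, ?_, ?_, ?_, len_w, len_a, len_b, len_a', len_b', ?_, ?_, ?_, ?_⟩
  · -- mem_GI_upper a
    intro x hx
    simp only [Set.mem_insert_iff, Set.mem_singleton_iff] at hx
    rcases hx with rfl|rfl
    · show len (t 1 * t 2) < len (t 1 * t 2 * t 0)
      rw [len_a, len_at0]; omega
    · show len (t 1 * t 2) < len (t 1 * t 2 * t 1)
      rw [len_a, len_at1]; omega
  · -- mem_GI_upper a'
    intro x hx
    simp only [Set.mem_insert_iff, Set.mem_singleton_iff] at hx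
    rcases hx with rfl|rfl
    · show len (t 0 * t 1 * t 2) < len (t 0 * t 1 * t 2 * t 0)
      rw [len_a', len_a't0]; omega
    · show len (t 0 * t 1 * t 2) < len (t 0 * t 1 * t 2 * t 1)
      rw [len_a', len_a't1]; omega
  · exact mul_mem (Subgroup.subset_closure (by simp)) (Subgroup.subset_closure (by simp))
  · exact Subgroup.subset_closure (by simp [b'])
  · show t 1 * t 2 * t 0 * t 1 = t 1 * t 2 * (t 0 * t 1)
    group
  · show t 1 * t 2 * t 0 * t 1 = t 0 * t 1 * t 2 * t 0
    exact cycle_rel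
  · rw [len_w, len_a, len_b]
  · rw [len_w, len_a', len_b']
  · -- a ≠ a'
    intro h
    have := congrArg phi h
    rw [phia, phia'] at this
    exact absurd this (by decide)
  · -- b ≠ b'
    intro h
    have := congrArg phi h
    rw [phib, phib'] at this
    exact absurd this (by decide)
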